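/- For any polynomial P in ℂ⟨X_1,…,X_m⟩ and any indices k, l in {1,…,m}, one has ∂_k D_l P = (∂_l D_k P)^t, where t is the flip (A⊗B)^t = B⊗A on the tensor square. -/

import Mathlib

/-- Words in `m` noncommuting letters: monomials of the free algebra `ℂ⟨X_1,…,X_m⟩`. -/
abbrev Word (m : ℕ) := List (Fin m)

/-- Noncommutative polynomials: finitely supported complex combinations of words. -/
abbrev NCPoly (m : ℕ) := Word m →₀ ℂ

/-- The tensor square, as combinations of pairs of words. -/
abbrev NCPoly₂ (m : ℕ) := (Word m × Word m) →₀ ℂ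

/-- Noncommutative derivative of a monomial: `∂_k w = Σ_{w = r X_k s} r ⊗ s`. -/
noncomputable def derW {m : ℕ} (k : Fin m) (w : Word m) : NCPoly₂ m :=
  ∑ i : Fin w.length,
    if w.get i = k then Finsupp.single (w.take i.1, w.drop (i.1 + 1)) 1 else 0

/-- Noncommutative derivative `∂_k`, extended linearly. -/
noncomputable def der {m : ℕ} (k : Fin m) : NCPoly m →ₗ[ℂ] NCPoly₂ m :=
  Finsupp.lsum ℂ fun w => LinearMap.toSpanSingleton ℂ _ (derW k w)

/-- Cyclic derivative of a monomial: `D_k w = Σ_{w = r X_k s} s r`. -/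
noncomputable def cderW {m : ℕ} (k : Fin m) (w : Word m) : NCPoly m :=
  ∑ i : Fin w.length,
    if w.get i = k then Finsupp.single (w.drop (i.1 + 1) ++ w.take i.1) 1 else 0

/-- Cyclic derivative `D_k`, extended linearly. -/
noncomputable def cder {m : ℕ} (k : Fin m) : NCPoly m →ₗ[ℂ] NCPoly m :=
  Finsupp.lsum ℂ fun w => LinearMap.toSpanSingleton ℂ _ (cderW k w)

/-- The flip `(A ⊗ B)ᵗ = B ⊗ A` on the tensor square, extended linearly. -/
noncomputable def flip2 {m : ℕ} (T : NCPoly₂ m) : NCPoly₂ m :=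
  T.sum fun rs c => Finsupp.single (rs.2, rs.1) c

/- ---------- auxiliary ---------- -/

lemma flip2_eq_mapDomain {m : ℕ} (T : NCPoly₂ m) :
    flip2 T = Finsupp.mapDomain Prod.swap T := rfl

lemma flip2_zero {m : ℕ} : flip2 (0 : NCPoly₂ m) = 0 := by
  simp [flip2_eq_mapDomain]

lemma flip2_add {m : ℕ} (A B : NCPoly₂ m) : flip2 (A + B) = flip2 A + flip2 B := by
  simp [flip2_eq_mapDomain, Finsupp.mapDomain_add]

lemma flip2_smul {m : ℕ} (c : ℂ) (A : NCPoly₂ m) : flip2 (c • A) = c • flip2 A := by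
  simp [flip2_eq_mapDomain, Finsupp.mapDomain_smul]

lemma flip2_single {m : ℕ} (p : Word m × Word m) (c : ℂ) :
    flip2 (Finsupp.single p c) = Finsupp.single (p.2, p.1) c := by
  simp [flip2_eq_mapDomain, Finsupp.mapDomain_single, Prod.swap]

lemma flip2_sum {m : ℕ} {ι : Type*} (s : Finset ι) (f : ι → NCPoly₂ m) :
    flip2 (∑ i ∈ s, f i) = ∑ i ∈ s, flip2 (f i) := by
  simp [flip2_eq_mapDomain, Finsupp.mapDomain_finset_sum]

lemma der_single {m : ℕ} (k : Fin m) (w : Word m) (c : ℂ) :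
    der k (Finsupp.single w c) = c • derW k w := by
  simp [der, Finsupp.lsum_single, LinearMap.toSpanSingleton_apply]

lemma cder_single {m : ℕ} (k : Fin m) (w : Word m) (c : ℂ) :
    cder k (Finsupp.single w c) = c • cderW k w := by
  simp [cder, Finsupp.lsum_single, LinearMap.toSpanSingleton_apply]

/-- The segment pair attached to indices `i ≠ j` (position of the `der` letter is `i`,
position of the `cder` letter is `j`). -/
def Fseg {m : ℕ} (w : Word m) (i j : ℕ) : Word m × Word m :=
  if j < i then ((w.drop (j+1)).take (i - (j+1)), w.drop (i+1) ++ w.take j)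
  else (w.drop (j+1) ++ w.take i, (w.take j).drop (i+1))


lemma Fseg_swap {m : ℕ} (w : Word m) {i j : ℕ} (h : i ≠ j) :
    Fseg w j i = (Fseg w i j).swap := by
  rcases lt_or_gt_of_ne h with hij | hij
  · rw [Fseg, if_pos hij, Fseg, if_neg (by omega)]
    simp [List.drop_take]
  · rw [Fseg, if_neg (by omega), Fseg, if_pos hij]
    simp [List.drop_take]


lemma derW_rot {m : ℕ} (w : Word m) (k : Fin m) (j : ℕ) (hj : j < w.length) :
    derW k (w.drop (j+1) ++ w.take j) =
      ∑ i : Fin w.length,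
        if i.1 ≠ j ∧ w.get i = k then Finsupp.single (Fseg w i.1 j) 1 else 0 := by
  classical
  set n := w.length with hn
  have hulen : (w.drop (j+1)).length = n - (j+1) := by simp; rfl
  have hvlen : (w.take j).length = j := by simp; omega
  have hLlen : (w.drop (j+1) ++ w.take j).length = n - 1 := by simp; omega
  rw [derW]
  rw [← Finset.sum_erase_add (Finset.univ : Finset (Fin n)) _
      (Finset.mem_univ (⟨j, hj⟩ : Fin n))]
  rw [if_neg (by simp), add_zero]
  refine Finset.sum_bij'
    (fun a _ => if h : a.1 + (j+1) < n then (⟨a.1 + (j+1), h⟩ : Fin n)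
       else ⟨a.1 - (n - (j+1)), by omega⟩)
    (fun b hb => if h : j < b.1 then (⟨b.1 - (j+1), by rw [hLlen]; have := b.2; omega⟩ :
         Fin (w.drop (j+1) ++ w.take j).length)
       else ⟨b.1 + (n - (j+1)), by
          rw [hLlen]
          have h2 := b.2
          have h3 : b ≠ ⟨j, hj⟩ := (Finset.mem_erase.1 hb).1
          have h4 : b.1 ≠ j := fun hh => h3 (Fin.ext hh)
          omega⟩)
    ?_ ?_ ?_ ?_ ?_
  · intro a _
    have ha : a.1 < n - 1 := by have h0 := a.2; omega
    by_cases h : a.1 + (j+1) < n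
    · simp only [dif_pos h]
      exact Finset.mem_erase.2 ⟨by simp; omega, Finset.mem_univ _⟩
    · simp only [dif_neg h]
      exact Finset.mem_erase.2 ⟨by simp; omega, Finset.mem_univ _⟩
  · intro b hb
    exact Finset.mem_univ _
  · intro a _
    have ha : a.1 < n - 1 := by have h0 := a.2; omega
    by_cases h : a.1 + (j+1) < n
    · simp only [dif_pos h]
      simp only [dif_pos (show j < a.1 + (j+1) by omega)]
      apply Fin.ext; simp
    · simp only [dif_neg h]
      simp only [dif_neg (show ¬ j < a.1 - (n - (j+1)) by omega)]
      apply Fin.ext; simp; omega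
  · intro b hb
    have h3 : b ≠ ⟨j, hj⟩ := (Finset.mem_erase.1 hb).1
    have hbj : b.1 ≠ j := fun hh => h3 (Fin.ext hh)
    have hb2 := b.2
    by_cases h : j < b.1
    · simp only [dif_pos h]
      simp only [dif_pos (show b.1 - (j+1) + (j+1) < n by omega)]
      apply Fin.ext; simp; omega
    · simp only [dif_neg h]
      simp only [dif_neg (show ¬ (b.1 + (n - (j+1)) + (j+1) < n) by omega)]
      apply Fin.ext; simp
      try omega
  · intro a _
    have ha : a.1 < n - 1 := by have h0 := a.2; omega
    by_cases h : a.1 + (j+1) < n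
    · simp only [dif_pos h]
      have hlt : a.1 < (w.drop (j+1)).length := by omega
      have hget : (w.drop (j+1) ++ w.take j).get a = w.get ⟨a.1 + (j+1), h⟩ := by
        simp only [List.get_eq_getElem, List.getElem_append_left hlt, List.getElem_drop]
        congr 1; omega
      have htake : (w.drop (j+1) ++ w.take j).take a.1 = (w.drop (j+1)).take a.1 :=
        List.take_append_of_le_length (by omega)
      have hdrop : (w.drop (j+1) ++ w.take j).drop (a.1+1)
          = w.drop (a.1 + (j+1) + 1) ++ w.take j := by
        rw [List.drop_append_of_le_length (by omega), List.drop_drop]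
        congr 2; omega
      have hF : Fseg w (a.1 + (j+1)) j
          = ((w.drop (j+1)).take a.1, w.drop (a.1 + (j+1) + 1) ++ w.take j) := by
        rw [Fseg, if_pos (by omega)]
        congr 2
        omega
      rw [hget, htake, hdrop, hF]
      by_cases hk : w.get ⟨a.1 + (j+1), h⟩ = k
      · rw [if_pos hk, if_pos ⟨by simp; omega, hk⟩]
      · rw [if_neg hk, if_neg (by simp only [List.get_eq_getElem] at hk; simp [hk])]
    · simp only [dif_neg h]
      have hge : (w.drop (j+1)).length ≤ a.1 := by omega
      have hplt : a.1 - (n - (j+1)) < j := by omega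
      have hget : (w.drop (j+1) ++ w.take j).get a
          = w.get ⟨a.1 - (n - (j+1)), by omega⟩ := by
        simp only [List.get_eq_getElem, List.getElem_append_right hge, List.getElem_take]
        congr 1
        omega
      have htake : (w.drop (j+1) ++ w.take j).take a.1
          = w.drop (j+1) ++ w.take (a.1 - (n - (j+1))) := by
        rw [List.take_append, List.take_of_length_le hge]
        congr 1
        rw [List.take_take]
        congr 1
        omega
      have hdrop : (w.drop (j+1) ++ w.take j).drop (a.1+1)
          = (w.take j).drop (a.1 - (n - (j+1)) + 1) := by
        rw [List.drop_append, List.drop_eq_nil_of_le (by omega),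
          List.nil_append]
        congr 1
        omega
      have hF : Fseg w (a.1 - (n - (j+1))) j
          = (w.drop (j+1) ++ w.take (a.1 - (n - (j+1))),
             (w.take j).drop (a.1 - (n - (j+1)) + 1)) := by
        rw [Fseg, if_neg (by omega)]
      rw [hget, htake, hdrop, hF]
      by_cases hk : w.get ⟨a.1 - (n - (j+1)), by omega⟩ = k
      · rw [if_pos hk, if_pos ⟨by simp; omega, hk⟩]
      · rw [if_neg hk, if_neg (by simp only [List.get_eq_getElem] at hk; simp [hk])]

lemma key {m : ℕ} (w : Word m) (k l : Fin m) :
    der k (cderW l w) = flip2 (der l (cderW k w)) := by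
  classical
  rw [cderW, map_sum, cderW, map_sum, flip2_sum]
  simp only [apply_ite (der k), apply_ite (der l), map_zero, der_single, one_smul,
    apply_ite flip2, flip2_zero]
  calc
    ∑ j : Fin w.length,
        (if w.get j = l then derW k (w.drop (j.1+1) ++ w.take j.1) else 0)
      = ∑ j : Fin w.length, ∑ i : Fin w.length,
          (if i.1 ≠ j.1 ∧ w.get i = k ∧ w.get j = l
            then Finsupp.single (Fseg w i.1 j.1) 1 else 0) := by
        refine Finset.sum_congr rfl fun j _ => ?_
        by_cases hl : w.get j = l
        · rw [if_pos hl, derW_rot w k j.1 j.2]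
          refine Finset.sum_congr rfl fun i _ => ?_
          by_cases hc : i.1 ≠ j.1 ∧ w.get i = k
          · rw [if_pos hc, if_pos ⟨hc.1, hc.2, hl⟩]
          · rw [if_neg hc, if_neg (by tauto)]
        · rw [if_neg hl, Finset.sum_eq_zero fun i _ => by rw [if_neg (by tauto)]]
    _ = ∑ i : Fin w.length, ∑ j : Fin w.length,
          (if i.1 ≠ j.1 ∧ w.get i = k ∧ w.get j = l
            then Finsupp.single (Fseg w i.1 j.1) 1 else 0) := Finset.sum_comm
    _ = ∑ i : Fin w.length,
        (if w.get i = k then flip2 (derW l (w.drop (i.1+1) ++ w.take i.1)) else 0) := by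
        refine Finset.sum_congr rfl fun i _ => ?_
        by_cases hk : w.get i = k
        · rw [if_pos hk, derW_rot w l i.1 i.2, flip2_sum]
          refine Finset.sum_congr rfl fun j _ => ?_
          by_cases hc : j.1 ≠ i.1 ∧ w.get j = l
          · rw [apply_ite flip2, if_pos hc, flip2_single,
              if_pos ⟨fun hh => hc.1 hh.symm, hk, hc.2⟩]
            rw [show ((Fseg w j.1 i.1).2, (Fseg w j.1 i.1).1) = (Fseg w j.1 i.1).swap from rfl,
              ← Fseg_swap w hc.1]
          · rw [apply_ite flip2, if_neg hc, flip2_zero, if_neg (by tauto)]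
        · rw [if_neg hk, Finset.sum_eq_zero fun j _ => by rw [if_neg (by tauto)]]


/-- `∂_k D_l P = (∂_l D_k P)ᵗ` for all polynomials `P` and all `k, l`. -/
theorem der_cder_flip (m : ℕ) (P : NCPoly m) (k l : Fin m) :
    der k (cder l P) = flip2 (der l (cder k P)) := by
  induction P using Finsupp.induction_linear with
  | zero => simp [flip2_zero]
  | add f g hf hg => simp [map_add, flip2_add, hf, hg]
  | single w c =>
      rw [cder_single, cder_single, map_smul, map_smul, flip2_smul, key]
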